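/- (Jackson-type estimate for the Legendre projection.) For every integer ℓ ≥ 0 there exists a constant C = C(ℓ) such that for all h > 0, all g ∈ C^{ℓ+1}([0,h]), and all k ∈ {0,…,ℓ}: sup_{x∈[0,h]} |g^{(k)}(x) − (Pg)^{(k)}(x)| ≤ C h^{ℓ−k+1} sup_{x∈[0,h]} |g^{(ℓ+1)}(x)|. -/

import Mathlib

open MeasureTheory Real Set Polynomial

noncomputable def legendreP (k : ℕ) : ℝ → ℝ :=
  fun x => (1 / ((2:ℝ) ^ k * (Nat.factorial k : ℝ))) *
    iteratedDeriv k (fun y : ℝ => (y ^ 2 - 1) ^ k) x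

/-- The Rodrigues weight `(X^2-1)^k`. -/
noncomputable def Wpoly (k : ℕ) : Polynomial ℝ := (X ^ 2 - 1) ^ k

/-- Legendre polynomial as a `Polynomial ℝ`. -/
noncomputable def Lpoly (k : ℕ) : Polynomial ℝ :=
  C (1 / ((2:ℝ) ^ k * (Nat.factorial k : ℝ))) * derivative^[k] (Wpoly k)

lemma iteratedDeriv_polyeval (p : Polynomial ℝ) (n : ℕ) :
    iteratedDeriv n (fun x => p.eval x) = fun x => (derivative^[n] p).eval x := by
  induction n with
  | zero => simp
  | succ n ih =>
    rw [iteratedDeriv_succ, ih]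
    funext x
    rw [Function.iterate_succ_apply']
    exact Polynomial.deriv _

lemma legendreP_eval (k : ℕ) : legendreP k = fun x => (Lpoly k).eval x := by
  funext x
  have h1 : (fun y : ℝ => (y ^ 2 - 1) ^ k) = fun y => (Wpoly k).eval y := by
    funext y; simp [Wpoly]
  rw [legendreP, h1, iteratedDeriv_polyeval]
  simp [Lpoly]

lemma Wpoly_natDegree (k : ℕ) : (Wpoly k).natDegree = 2 * k := by
  have : ((X:Polynomial ℝ) ^ 2 - 1).natDegree = 2 := by
    simpa using (natDegree_X_pow_sub_C (n := 2) (r := (1:ℝ)))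
  rw [Wpoly, natDegree_pow, this, mul_comm]

lemma Wpoly_coeff_top (k : ℕ) : (Wpoly k).coeff (2 * k) = 1 := by
  have hm : ((X:Polynomial ℝ) ^ 2 - 1).Monic := by
    simpa using monic_X_pow_sub_C (1:ℝ) (two_ne_zero)
  have h2 := (hm.pow (n := k)).leadingCoeff
  rw [leadingCoeff] at h2
  have h3 : ((X:Polynomial ℝ)^2-1)^k = Wpoly k := rfl
  rw [h3, Wpoly_natDegree k] at h2
  exact h2

lemma Lpoly_natDegree_le (k : ℕ) : (Lpoly k).natDegree ≤ k := by
  refine (natDegree_C_mul_le _ _).trans ?_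
  refine (natDegree_iterate_derivative _ _).trans ?_
  rw [Wpoly_natDegree]; omega

lemma Lpoly_coeff_self (k : ℕ) :
    (Lpoly k).coeff k =
      (1 / ((2:ℝ) ^ k * (Nat.factorial k : ℝ))) * ((2*k).descFactorial k : ℝ) := by
  rw [Lpoly, coeff_C_mul, coeff_iterate_derivative]
  have h2 : k + k = 2 * k := by ring
  rw [h2, Wpoly_coeff_top, nsmul_eq_mul, mul_one]

lemma Lpoly_coeff_self_ne (k : ℕ) : (Lpoly k).coeff k ≠ 0 := by
  rw [Lpoly_coeff_self]
  have h1 : (0:ℝ) < ((2*k).descFactorial k : ℝ) := by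
    exact_mod_cast Nat.pos_of_ne_zero (fun hz => by
      have := Nat.descFactorial_eq_zero_iff_lt.mp hz; omega)
  have h2 : (0:ℝ) < (2:ℝ) ^ k * (Nat.factorial k : ℝ) := by positivity
  positivity

lemma poly_intervalIntegrable (p : Polynomial ℝ) (a b : ℝ) :
    IntervalIntegrable (fun x => p.eval x) volume a b :=
  p.continuous.intervalIntegrable a b

/-- one integration by parts, with vanishing boundary terms -/
lemma poly_ibp (p q : Polynomial ℝ) (hq1 : q.eval 1 = 0) (hqm : q.eval (-1) = 0) :
    ∫ x in (-1:ℝ)..1, p.eval x * (derivative q).eval x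
      = - ∫ x in (-1:ℝ)..1, (derivative p).eval x * q.eval x := by
  have h := intervalIntegral.integral_deriv_mul_eq_sub
    (a := (-1:ℝ)) (b := (1:ℝ))
    (u := fun x => p.eval x) (v := fun x => q.eval x)
    (u' := fun x => (derivative p).eval x) (v' := fun x => (derivative q).eval x)
    (fun x _ => p.hasDerivAt x) (fun x _ => q.hasDerivAt x)
    (poly_intervalIntegrable _ _ _) (poly_intervalIntegrable _ _ _)
  rw [intervalIntegral.integral_add (f := fun x => (derivative p).eval x * q.eval x)
    (g := fun x => p.eval x * (derivative q).eval x)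
    (((derivative p).continuous.mul q.continuous).intervalIntegrable _ _)
    ((p.continuous.mul (derivative q).continuous).intervalIntegrable _ _)] at h
  simp only [hq1, hqm, mul_zero, zero_sub, sub_zero] at h
  linarith [h]

lemma dvd_derivative_step (a : ℝ) (n : ℕ) (p : Polynomial ℝ)
    (h : (X - C a) ^ n ∣ p) : (X - C a) ^ (n - 1) ∣ derivative p := by
  rcases n with _ | m
  · simpa using one_dvd _
  · obtain ⟨r, rfl⟩ := h
    rw [derivative_mul, derivative_pow]
    simp only [derivative_X_sub_C, mul_one, Nat.add_sub_cancel]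
    refine dvd_add (dvd_mul_of_dvd_left ?_ _) (dvd_mul_of_dvd_left ?_ _)
    · exact dvd_mul_left _ _
    · exact pow_dvd_pow _ (Nat.le_succ m)

lemma dvd_iterate_derivative' (a : ℝ) (n : ℕ) (p : Polynomial ℝ)
    (h : (X - C a) ^ n ∣ p) (m : ℕ) : (X - C a) ^ (n - m) ∣ derivative^[m] p := by
  induction m generalizing n p with
  | zero => simpa using h
  | succ m ih =>
    rw [Function.iterate_succ_apply]
    have := ih (n - 1) (derivative p) (dvd_derivative_step a n p h)
    simpa [Nat.sub_sub, Nat.add_comm] using this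

lemma Wpoly_boundary (k m : ℕ) (hm : m < k) (a : ℝ) (ha : a = 1 ∨ a = -1) :
    (derivative^[m] (Wpoly k)).eval a = 0 := by
  have hdvd : (X - C a) ^ k ∣ Wpoly k := by
    refine pow_dvd_pow_of_dvd ?_ k
    refine dvd_iff_isRoot.mpr ?_
    rcases ha with rfl | rfl <;> simp [IsRoot]
  have h2 := dvd_iterate_derivative' a k (Wpoly k) hdvd m
  have h3 : (X - C a) ∣ derivative^[m] (Wpoly k) := by
    refine dvd_trans ?_ h2
    exact dvd_pow_self _ (by omega)
  exact (dvd_iff_isRoot.mp h3)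

lemma key_ibp (k : ℕ) (q : Polynomial ℝ) :
    ∀ m ≤ k,
      ∫ x in (-1:ℝ)..1, q.eval x * (derivative^[k] (Wpoly k)).eval x
        = (-1:ℝ)^m * ∫ x in (-1:ℝ)..1,
            (derivative^[m] q).eval x * (derivative^[k-m] (Wpoly k)).eval x := by
  intro m hm
  induction m with
  | zero => simp
  | succ m ih =>
    rw [ih (by omega)]
    have hkm : k - m = (k - (m+1)) + 1 := by omega
    have hb1 : (derivative^[k-(m+1)] (Wpoly k)).eval 1 = 0 :=
      Wpoly_boundary k _ (by omega) 1 (Or.inl rfl)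
    have hbm : (derivative^[k-(m+1)] (Wpoly k)).eval (-1) = 0 :=
      Wpoly_boundary k _ (by omega) (-1) (Or.inr rfl)
    have := poly_ibp (derivative^[m] q) (derivative^[k-(m+1)] (Wpoly k)) hb1 hbm
    rw [hkm, Function.iterate_succ_apply', this, Function.iterate_succ_apply']
    ring

noncomputable def Jint (k : ℕ) : ℝ := ∫ x in (-1:ℝ)..1, (Wpoly k).eval x

lemma Jrec (m : ℕ) :
    (2*(m:ℝ)+3) * Jint (m+1) + (2*(m:ℝ)+2) * Jint m = 0 := by
  have hpoly : derivative (X * Wpoly (m+1)) =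
      C (2*(m:ℝ)+3) * Wpoly (m+1) + C (2*(m:ℝ)+2) * Wpoly m := by
    rw [Wpoly, Wpoly, derivative_mul, derivative_pow]
    simp only [derivative_X, derivative_sub, derivative_one, derivative_X_pow]
    push_cast
    simp only [C_add, C_mul, C_1, map_ofNat]
    ring
  have hint : ∫ x in (-1:ℝ)..1, (derivative (X * Wpoly (m+1))).eval x
      = (X * Wpoly (m+1)).eval 1 - (X * Wpoly (m+1)).eval (-1) :=
    intervalIntegral.integral_eq_sub_of_hasDerivAt
      (fun x _ => Polynomial.hasDerivAt _ x) (poly_intervalIntegrable _ _ _)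
  have hz : (X * Wpoly (m+1)).eval 1 = 0 ∧ (X * Wpoly (m+1)).eval (-1) = 0 := by
    constructor <;> simp [Wpoly]
  rw [hz.1, hz.2, sub_zero, hpoly] at hint
  have hsplit : ∫ x in (-1:ℝ)..1,
      (C (2*(m:ℝ)+3) * Wpoly (m+1) + C (2*(m:ℝ)+2) * Wpoly m).eval x
      = (2*(m:ℝ)+3) * Jint (m+1) + (2*(m:ℝ)+2) * Jint m := by
    simp only [eval_add, eval_mul, eval_C]
    rw [intervalIntegral.integral_add
      ((((C (2*(m:ℝ)+3) * Wpoly (m+1))).continuous).intervalIntegrable _ _ |>.congr ?_)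
      ((((C (2*(m:ℝ)+2) * Wpoly m)).continuous).intervalIntegrable _ _ |>.congr ?_)]
    · rw [intervalIntegral.integral_const_mul, intervalIntegral.integral_const_mul]; rfl
    · intro x _; simp
    · intro x _; simp
  rw [hsplit] at hint
  linarith [hint]

lemma Jval (k : ℕ) :
    Jint k = (-1:ℝ)^k * 2^(2*k+1) * ((Nat.factorial k : ℝ))^2 / (Nat.factorial (2*k+1) : ℝ) := by
  induction k with
  | zero =>
    simp [Jint, Wpoly]
    norm_num
  | succ m ih =>
    have hrec := Jrec m
    rw [ih] at hrec
    have h1 : (0:ℝ) < 2*(m:ℝ)+3 := by positivity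
    have hJ : Jint (m+1) = -((2*(m:ℝ)+2) * ((-1:ℝ)^m * 2^(2*m+1) * ((Nat.factorial m : ℝ))^2
        / (Nat.factorial (2*m+1) : ℝ))) / (2*(m:ℝ)+3) := by
      field_simp at hrec ⊢
      linarith [hrec]
    rw [hJ]
    have hf1 : (Nat.factorial (2*(m+1)+1) : ℝ)
        = (2*(m:ℝ)+3) * ((2*(m:ℝ)+2) * (Nat.factorial (2*m+1) : ℝ)) := by
      have : 2*(m+1)+1 = (2*m+1) + 1 + 1 := by omega
      rw [this, Nat.factorial_succ, Nat.factorial_succ]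
      push_cast
      ring
    have hf2 : (Nat.factorial (m+1) : ℝ) = ((m:ℝ)+1) * (Nat.factorial m : ℝ) := by
      rw [Nat.factorial_succ]; push_cast; ring
    rw [hf1, hf2]
    have hfm : (0:ℝ) < (Nat.factorial (2*m+1) : ℝ) := by exact_mod_cast (2*m+1).factorial_pos
    field_simp
    ring

lemma Lpoly_ortho (j k : ℕ) (hjk : j ≤ k) :
    ∫ x in (-1:ℝ)..1, (Lpoly j).eval x * (Lpoly k).eval x
      = if j = k then 2/(2*(k:ℝ)+1) else 0 := by
  have hstep1 : ∫ x in (-1:ℝ)..1, (Lpoly j).eval x * (Lpoly k).eval x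
      = (1 / ((2:ℝ) ^ k * (Nat.factorial k : ℝ)))
        * ∫ x in (-1:ℝ)..1, (Lpoly j).eval x * (derivative^[k] (Wpoly k)).eval x := by
    rw [← intervalIntegral.integral_const_mul]
    congr 1; funext x
    simp only [Lpoly, eval_mul, eval_C]; ring
  have hstep2 := key_ibp k (Lpoly j) k le_rfl
  rcases eq_or_lt_of_le hjk with rfl | hlt
  · -- diagonal case
    have hD : derivative^[j] (Lpoly j)
        = C ((1 / ((2:ℝ) ^ j * (Nat.factorial j : ℝ))) * (Nat.factorial (2*j) : ℝ)) := by
      rw [Lpoly, iterate_derivative_C_mul]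
      have h2j : derivative^[j] (derivative^[j] (Wpoly j)) = derivative^[2*j] (Wpoly j) := by
        rw [← Function.iterate_add_apply]
        congr 1; omega
      rw [h2j]
      have hdeg : (derivative^[2*j] (Wpoly j)).natDegree ≤ 0 := by
        refine (natDegree_iterate_derivative _ _).trans ?_
        rw [Wpoly_natDegree]; omega
      rw [eq_C_of_natDegree_le_zero hdeg]
      have hcoeff : (derivative^[2*j] (Wpoly j)).coeff 0 = (Nat.factorial (2*j) : ℝ) := by
        rw [coeff_iterate_derivative, zero_add, Wpoly_coeff_top, Nat.descFactorial_self]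
        simp
      rw [hcoeff, ← C_mul]
    rw [if_pos rfl, hstep1, hstep2, Nat.sub_self]
    simp only [hD, Function.iterate_zero_apply, eval_C]
    rw [intervalIntegral.integral_const_mul]
    have hJ : ∫ x in (-1:ℝ)..1, (Wpoly j).eval x = Jint j := rfl
    rw [hJ, Jval]
    have hfact : (Nat.factorial (2*j+1) : ℝ) = (2*(j:ℝ)+1) * (Nat.factorial (2*j) : ℝ) := by
      rw [Nat.factorial_succ]; push_cast; ring
    have h2pow : (2:ℝ)^(2*j+1) = 2 * (2^j * 2^j) := by
      rw [pow_succ, two_mul, pow_add]; ring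
    have hne1 : ((Nat.factorial j : ℝ)) ≠ 0 := by exact_mod_cast j.factorial_ne_zero
    have hne2 : ((Nat.factorial (2*j) : ℝ)) ≠ 0 := by exact_mod_cast (2*j).factorial_ne_zero
    have hne3 : ((2:ℝ)^j) ≠ 0 := by positivity
    have hne4 : (2*(j:ℝ)+1) ≠ 0 := by positivity
    rw [hfact, h2pow]
    rcases Nat.even_or_odd j with he | ho
    · rw [he.neg_one_pow]; field_simp
    · rw [ho.neg_one_pow]; field_simp
  · -- off-diagonal
    rw [if_neg (by omega), hstep1, hstep2]
    have hz : derivative^[k] (Lpoly j) = 0 :=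
      iterate_derivative_eq_zero (lt_of_le_of_lt (Lpoly_natDegree_le j) hlt)
    simp [hz]

/-- reproduction predicate on `[-1,1]` -/
def Repro (ℓ : ℕ) (q : Polynomial ℝ) : Prop :=
  ∀ t : ℝ, ∑ k ∈ Finset.range (ℓ+1),
    ((2*(k:ℝ)+1)/2) * (∫ x in (-1:ℝ)..1, q.eval x * (Lpoly k).eval x) * (Lpoly k).eval t
    = q.eval t

lemma repro_L (ℓ j : ℕ) (hj : j ≤ ℓ) : Repro ℓ (Lpoly j) := by
  intro t
  rw [Finset.sum_eq_single j]
  · have := Lpoly_ortho j j le_rfl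
    rw [if_pos rfl] at this
    rw [this]
    have h1 : (2*(j:ℝ)+1) ≠ 0 := by positivity
    field_simp
  · intro k hk hkj
    have hzero : ∫ x in (-1:ℝ)..1, (Lpoly j).eval x * (Lpoly k).eval x = 0 := by
      rcases le_or_gt j k with h | h
      · have := Lpoly_ortho j k h; rwa [if_neg hkj.symm] at this
      · have := Lpoly_ortho k j h.le
        rw [if_neg hkj] at this
        rw [← this]
        congr 1; funext x; ring
    rw [hzero]; ring
  · intro hj'
    exact absurd (Finset.mem_range.mpr (by omega)) hj'

lemma repro_smul (ℓ : ℕ) (c : ℝ) (q : Polynomial ℝ) (hq : Repro ℓ q) :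
    Repro ℓ (C c * q) := by
  intro t
  have hint : ∀ k, ∫ x in (-1:ℝ)..1, (C c * q).eval x * (Lpoly k).eval x
      = c * ∫ x in (-1:ℝ)..1, q.eval x * (Lpoly k).eval x := by
    intro k
    rw [← intervalIntegral.integral_const_mul]
    congr 1; funext x; simp only [eval_mul, eval_C]; ring
  simp only [hint]
  simp only [eval_mul, eval_C]
  rw [← hq t, Finset.mul_sum]
  refine Finset.sum_congr rfl fun k _ => by ring

lemma repro_add (ℓ : ℕ) (q r : Polynomial ℝ) (hq : Repro ℓ q) (hr : Repro ℓ r) :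
    Repro ℓ (q + r) := by
  intro t
  have hint : ∀ k, ∫ x in (-1:ℝ)..1, (q + r).eval x * (Lpoly k).eval x
      = (∫ x in (-1:ℝ)..1, q.eval x * (Lpoly k).eval x)
        + ∫ x in (-1:ℝ)..1, r.eval x * (Lpoly k).eval x := by
    intro k
    rw [← intervalIntegral.integral_add (f := fun x => q.eval x * (Lpoly k).eval x)
      (g := fun x => r.eval x * (Lpoly k).eval x)
      ((q.continuous.mul (Lpoly k).continuous).intervalIntegrable _ _)
      ((r.continuous.mul (Lpoly k).continuous).intervalIntegrable _ _)]
    congr 1; funext x; simp only [eval_add]; ring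
  simp only [hint]
  simp only [eval_add]
  rw [← hq t, ← hr t, ← Finset.sum_add_distrib]
  refine Finset.sum_congr rfl fun k _ => by ring

lemma repro_all (ℓ : ℕ) : ∀ n, n ≤ ℓ → ∀ q : Polynomial ℝ, q.natDegree ≤ n → Repro ℓ q := by
  intro n
  induction n with
  | zero =>
    intro _ q hq
    have hL0 : Lpoly 0 = 1 := by simp [Lpoly, Wpoly]
    have : q = C (q.coeff 0) * Lpoly 0 := by
      rw [hL0, mul_one]; exact eq_C_of_natDegree_le_zero hq
    rw [this]
    exact repro_smul ℓ _ _ (repro_L ℓ 0 (by omega))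
  | succ n ih =>
    intro hn q hq
    set c : ℝ := q.coeff (n+1) / (Lpoly (n+1)).coeff (n+1) with hcdef
    set r : Polynomial ℝ := q - C c * Lpoly (n+1) with hrdef
    have hrdeg : r.natDegree ≤ n := by
      rw [natDegree_le_iff_coeff_eq_zero]
      intro N hN
      rcases eq_or_lt_of_le (Nat.succ_le_of_lt hN) with rfl | hlt
      · rw [hrdef]
        simp only [coeff_sub, coeff_C_mul]
        rw [hcdef, div_mul_cancel₀ _ (Lpoly_coeff_self_ne (n+1)), sub_self]
      · rw [hrdef]
        simp only [coeff_sub, coeff_C_mul]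
        rw [coeff_eq_zero_of_natDegree_lt (lt_of_le_of_lt hq hlt),
          coeff_eq_zero_of_natDegree_lt (lt_of_le_of_lt (Lpoly_natDegree_le (n+1)) hlt)]
        ring
    have hqeq : q = r + C c * Lpoly (n+1) := by rw [hrdef]; ring
    rw [hqeq]
    exact repro_add ℓ _ _ (ih (by omega) r hrdeg)
      (repro_smul ℓ c _ (repro_L ℓ (n+1) hn))

noncomputable def legProj (ℓ : ℕ) (h : ℝ) (g : ℝ → ℝ) : ℝ → ℝ :=
  fun x => ∑ k ∈ Finset.range (ℓ + 1),
    ((2 * (k : ℝ) + 1) / h) * (∫ y in (0:ℝ)..h, g y * legendreP k (2 * y / h - 1)) *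
      legendreP k (2 * x / h - 1)

/-- the polynomial representing `legProj ℓ h g` -/
noncomputable def projPoly (ℓ : ℕ) (h : ℝ) (g : ℝ → ℝ) : Polynomial ℝ :=
  ∑ k ∈ Finset.range (ℓ + 1),
    C (((2 * (k : ℝ) + 1) / h) * (∫ y in (0:ℝ)..h, g y * legendreP k (2 * y / h - 1))) *
      ((Lpoly k).comp (C (2/h) * X - C 1))

lemma two_div_mul (h x : ℝ) : 2 / h * x - 1 = 2 * x / h - 1 := by ring

lemma legProj_eq_projPoly (ℓ : ℕ) (h : ℝ) (g : ℝ → ℝ) :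
    legProj ℓ h g = fun x => (projPoly ℓ h g).eval x := by
  funext x
  rw [legProj, projPoly, eval_finset_sum]
  refine Finset.sum_congr rfl fun k _ => ?_
  rw [eval_mul, eval_C, eval_comp]
  simp only [eval_sub, eval_mul, eval_C, eval_X, eval_one]
  rw [two_div_mul, legendreP_eval]

/-- `legProj` reproduces polynomials of degree at most `ℓ`. -/
lemma legProj_poly (ℓ : ℕ) (h : ℝ) (hh : 0 < h) (q : Polynomial ℝ) (hq : q.natDegree ≤ ℓ) :
    ∀ x : ℝ, legProj ℓ h (fun y => q.eval y) x = q.eval x := by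
  intro x
  have hne : h ≠ 0 := hh.ne'
  set Qp : Polynomial ℝ := q.comp (C (h/2) * (X + C 1)) with hQp
  have hQdeg : Qp.natDegree ≤ ℓ := by
    refine (natDegree_comp_le).trans ?_
    have h1 : (C (h/2) * (X + C 1)).natDegree ≤ 1 :=
      (natDegree_C_mul_le _ _).trans (natDegree_X_add_C (1:ℝ)).le
    calc q.natDegree * (C (h/2) * (X + C 1)).natDegree ≤ q.natDegree * 1 :=
          Nat.mul_le_mul_left _ h1
      _ ≤ ℓ := by omega
  have hQeval : ∀ y : ℝ, Qp.eval (2 * y / h - 1) = q.eval y := by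
    intro y
    rw [hQp, eval_comp]
    simp only [eval_mul, eval_add, eval_C, eval_X, eval_one]
    congr 1
    field_simp
    ring
  have cv : ∀ j : ℕ, (∫ y in (0:ℝ)..h, q.eval y * legendreP j (2 * y / h - 1))
      = (h/2) * ∫ u in (-1:ℝ)..1, Qp.eval u * (Lpoly j).eval u := by
    intro j
    have hG : ∀ y : ℝ, q.eval y * legendreP j (2 * y / h - 1)
        = (fun u => Qp.eval u * (Lpoly j).eval u) (2/h * y + (-1)) := by
      intro y
      simp only
      have hy : 2/h * y + (-1) = 2 * y / h - 1 := by ring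
      rw [hy, hQeval, legendreP_eval]
    calc (∫ y in (0:ℝ)..h, q.eval y * legendreP j (2 * y / h - 1))
        = ∫ y in (0:ℝ)..h, (fun u => Qp.eval u * (Lpoly j).eval u) (2/h * y + (-1)) := by
          congr 1; funext y; exact hG y
      _ = (2/h)⁻¹ • ∫ u in (2/h*0 + (-1))..(2/h*h + (-1)), Qp.eval u * (Lpoly j).eval u :=
          intervalIntegral.integral_comp_mul_add (c := 2/h)
            (fun u => Qp.eval u * (Lpoly j).eval u) (by positivity) (-1)
      _ = (h/2) * ∫ u in (-1:ℝ)..1, Qp.eval u * (Lpoly j).eval u := by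
          rw [mul_zero, zero_add, div_mul_cancel₀ _ hne, smul_eq_mul, inv_div]
          norm_num
  rw [legProj]
  simp only [cv]
  have := repro_all ℓ ℓ le_rfl Qp hQdeg (2 * x / h - 1)
  calc ∑ k ∈ Finset.range (ℓ+1),
        ((2*(k:ℝ)+1)/h) * ((h/2) * ∫ u in (-1:ℝ)..1, Qp.eval u * (Lpoly k).eval u)
          * legendreP k (2*x/h - 1)
      = ∑ k ∈ Finset.range (ℓ+1),
        ((2*(k:ℝ)+1)/2) * (∫ u in (-1:ℝ)..1, Qp.eval u * (Lpoly k).eval u)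
          * (Lpoly k).eval (2*x/h - 1) := by
        refine Finset.sum_congr rfl fun k _ => ?_
        rw [legendreP_eval]
        field_simp
    _ = Qp.eval (2*x/h - 1) := this
    _ = q.eval x := hQeval x

lemma iterate_derivative_comp_linear (p : Polynomial ℝ) (a b : ℝ) (k : ℕ) :
    derivative^[k] (p.comp (C a * X - C b))
      = C (a^k) * (derivative^[k] p).comp (C a * X - C b) := by
  induction k with
  | zero => simp
  | succ k ih =>
    rw [Function.iterate_succ_apply', ih, derivative_C_mul, derivative_comp]
    have hlin : derivative (C a * X - C b) = C a := by
      simp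
    rw [hlin, ← Function.iterate_succ_apply' derivative k p]
    simp only [Nat.succ_eq_add_one]
    rw [pow_succ, C_mul]
    ring

lemma mem_Icc_scale {h y : ℝ} (hh : 0 < h) (hy : y ∈ Set.Icc 0 h) :
    2 * y / h - 1 ∈ Set.Icc (-1:ℝ) 1 := by
  obtain ⟨h0, h1⟩ := hy
  constructor
  · have : 0 ≤ 2 * y / h := by positivity
    linarith
  · have : 2 * y / h ≤ 2 := by
      rw [div_le_iff₀ hh]
      linarith
    linarith

lemma projPoly_deriv_bound (ℓ : ℕ) (B : ℝ) (hB1 : 1 ≤ B)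
    (hB : ∀ j ≤ ℓ, ∀ m ≤ ℓ, ∀ t ∈ Set.Icc (-1:ℝ) 1, |(derivative^[m] (Lpoly j)).eval t| ≤ B)
    (h : ℝ) (hh : 0 < h) (R : ℝ → ℝ) (K : ℝ) (hK : 0 ≤ K)
    (hR : ∀ y ∈ Set.Icc (0:ℝ) h, |R y| ≤ K)
    (k : ℕ) (hk : k ≤ ℓ) (x : ℝ) (hx : x ∈ Set.Icc (0:ℝ) h) :
    |(derivative^[k] (projPoly ℓ h R)).eval x|
      ≤ ((ℓ:ℝ)+1) * (2*(ℓ:ℝ)+1) * B^2 * K * (2/h)^k := by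
  rw [projPoly, iterate_derivative_sum]
  have heval : ∀ j ∈ Finset.range (ℓ+1),
      (derivative^[k] (C (((2*(j:ℝ)+1)/h) * (∫ y in (0:ℝ)..h, R y * legendreP j (2*y/h-1)))
        * ((Lpoly j).comp (C (2/h) * X - C 1)))).eval x
      = (((2*(j:ℝ)+1)/h) * (∫ y in (0:ℝ)..h, R y * legendreP j (2*y/h-1)))
          * ((2/h)^k * (derivative^[k] (Lpoly j)).eval (2*x/h - 1)) := by
    intro j _
    rw [iterate_derivative_C_mul, iterate_derivative_comp_linear]
    simp only [eval_mul, eval_C, eval_comp, eval_sub, eval_mul, eval_C, eval_X, eval_one]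
    rw [two_div_mul]
  rw [eval_finset_sum, Finset.sum_congr rfl heval]
  have hterm : ∀ j ∈ Finset.range (ℓ+1),
      |(((2*(j:ℝ)+1)/h) * (∫ y in (0:ℝ)..h, R y * legendreP j (2*y/h-1)))
        * ((2/h)^k * (derivative^[k] (Lpoly j)).eval (2*x/h - 1))|
      ≤ (2*(ℓ:ℝ)+1) * B^2 * K * (2/h)^k := by
    intro j hj
    have hjl : j ≤ ℓ := by
      have := Finset.mem_range.mp hj; omega
    have hIbound : |∫ y in (0:ℝ)..h, R y * legendreP j (2*y/h-1)| ≤ K * B * h := by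
      have hb : ∀ y ∈ Set.uIoc (0:ℝ) h, ‖R y * legendreP j (2*y/h-1)‖ ≤ K * B := by
        intro y hy
        have hy' : y ∈ Set.Icc (0:ℝ) h := by
          rw [Set.uIoc_of_le hh.le] at hy
          exact ⟨hy.1.le, hy.2⟩
        rw [Real.norm_eq_abs, abs_mul]
        refine mul_le_mul (hR y hy') ?_ (abs_nonneg _) hK
        rw [legendreP_eval]
        exact hB j hjl 0 (by omega) _ (mem_Icc_scale hh hy')
      have := intervalIntegral.norm_integral_le_of_norm_le_const hb
      rw [Real.norm_eq_abs] at this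
      calc |∫ y in (0:ℝ)..h, R y * legendreP j (2*y/h-1)| ≤ K * B * |h - 0| := this
        _ = K * B * h := by rw [sub_zero, abs_of_pos hh]
    have hLbound : |(derivative^[k] (Lpoly j)).eval (2*x/h - 1)| ≤ B :=
      hB j hjl k hk _ (mem_Icc_scale hh hx)
    have h1 : |((2*(j:ℝ)+1)/h)| = (2*(j:ℝ)+1)/h := abs_of_pos (by positivity)
    have h2 : |((2:ℝ)/h)^k| = (2/h)^k := abs_of_pos (by positivity)
    have hjR : (j:ℝ) ≤ (ℓ:ℝ) := by exact_mod_cast hjl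
    calc |(((2*(j:ℝ)+1)/h) * (∫ y in (0:ℝ)..h, R y * legendreP j (2*y/h-1)))
        * ((2/h)^k * (derivative^[k] (Lpoly j)).eval (2*x/h - 1))|
        = ((2*(j:ℝ)+1)/h) * |∫ y in (0:ℝ)..h, R y * legendreP j (2*y/h-1)|
            * ((2/h)^k * |(derivative^[k] (Lpoly j)).eval (2*x/h - 1)|) := by
          rw [abs_mul, abs_mul, abs_mul, h1, h2]
      _ ≤ ((2*(ℓ:ℝ)+1)/h) * (K * B * h) * ((2/h)^k * B) := by
          gcongr <;> first | assumption | positivity | linarith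
      _ = (2*(ℓ:ℝ)+1) * B^2 * K * (2/h)^k := by
          field_simp
  calc |∑ j ∈ Finset.range (ℓ+1),
      (((2*(j:ℝ)+1)/h) * (∫ y in (0:ℝ)..h, R y * legendreP j (2*y/h-1)))
        * ((2/h)^k * (derivative^[k] (Lpoly j)).eval (2*x/h - 1))|
      ≤ ∑ j ∈ Finset.range (ℓ+1),
        |(((2*(j:ℝ)+1)/h) * (∫ y in (0:ℝ)..h, R y * legendreP j (2*y/h-1)))
          * ((2/h)^k * (derivative^[k] (Lpoly j)).eval (2*x/h - 1))| :=
        Finset.abs_sum_le_sum_abs _ _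
    _ ≤ ∑ _j ∈ Finset.range (ℓ+1), (2*(ℓ:ℝ)+1) * B^2 * K * (2/h)^k :=
        Finset.sum_le_sum hterm
    _ = ((ℓ:ℝ)+1) * (2*(ℓ:ℝ)+1) * B^2 * K * (2/h)^k := by
        rw [Finset.sum_const, Finset.card_range, nsmul_eq_mul]
        push_cast
        ring

lemma iterate_derivative_add' (p q : Polynomial ℝ) (k : ℕ) :
    derivative^[k] (p + q) = derivative^[k] p + derivative^[k] q := by
  induction k with
  | zero => simp
  | succ k ih => rw [Function.iterate_succ_apply', ih, derivative_add,
      Function.iterate_succ_apply', Function.iterate_succ_apply']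

theorem legProj_jackson_estimate (ℓ : ℕ) :
    ∃ C : ℝ, 0 < C ∧
      ∀ h : ℝ, 0 < h → ∀ g : ℝ → ℝ, ContDiffOn ℝ (ℓ + 1) g (Set.Icc 0 h) →
      ∀ M : ℝ, (∀ y ∈ Set.Icc (0:ℝ) h, |iteratedDerivWithin (ℓ + 1) g (Set.Icc 0 h) y| ≤ M) →
      ∀ k ≤ ℓ, ∀ x ∈ Set.Icc (0:ℝ) h,
        |iteratedDerivWithin k g (Set.Icc 0 h) x - iteratedDeriv k (legProj ℓ h g) x|
          ≤ C * h ^ (ℓ - k + 1) * M := by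
  -- a uniform bound for the Legendre polynomials and their derivatives on [-1,1]
  have hBex : ∀ jm : ℕ × ℕ, ∃ Cb : ℝ, ∀ t ∈ Set.Icc (-1:ℝ) 1,
      |(derivative^[jm.2] (Lpoly jm.1)).eval t| ≤ Cb := by
    intro jm
    obtain ⟨Cb, hCb⟩ := isCompact_Icc.exists_bound_of_continuousOn
      (Continuous.continuousOn (derivative^[jm.2] (Lpoly jm.1)).continuous)
    exact ⟨Cb, fun t ht => by simpa using hCb t ht⟩
  choose bfun hbfun using hBex
  set S : Finset (ℕ × ℕ) := Finset.range (ℓ+1) ×ˢ Finset.range (ℓ+1) with hS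
  have hSne : S.Nonempty := ⟨(0,0), by simp [hS]⟩
  set B : ℝ := max 1 (S.sup' hSne bfun) with hBdef
  have hB1 : (1:ℝ) ≤ B := le_max_left _ _
  have hB : ∀ j ≤ ℓ, ∀ m ≤ ℓ, ∀ t ∈ Set.Icc (-1:ℝ) 1,
      |(derivative^[m] (Lpoly j)).eval t| ≤ B := by
    intro j hj m hm t ht
    refine (hbfun (j,m) t ht).trans (le_trans ?_ (le_max_right _ _))
    exact Finset.le_sup' bfun (by simp [hS]; omega)
  refine ⟨((ℓ:ℝ)+1) * (2*(ℓ:ℝ)+1) * B^2 * 2^ℓ + 1, by positivity, ?_⟩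
  intro h hh g hg M hM k hk x hx
  set s : Set ℝ := Set.Icc (0:ℝ) h with hsdef
  have hs : UniqueDiffOn ℝ s := uniqueDiffOn_Icc hh
  have h0s : (0:ℝ) ∈ s := ⟨le_refl 0, hh.le⟩
  have hM0 : 0 ≤ M := le_trans (abs_nonneg _) (hM 0 h0s)
  -- Taylor polynomial of degree ℓ at 0
  set T : Polynomial ℝ := ∑ i ∈ Finset.range (ℓ+1),
    C (iteratedDerivWithin i g s 0 / (Nat.factorial i : ℝ)) * X^i with hTdef
  have hTdeg : T.natDegree ≤ ℓ := by
    refine natDegree_sum_le_of_forall_le _ _ fun i hi => ?_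
    refine (natDegree_C_mul_le _ _).trans ?_
    rw [natDegree_X_pow]
    exact Nat.lt_succ_iff.mp (Finset.mem_range.mp hi)
  have hTcoeff : ∀ i ≤ ℓ, T.coeff i = iteratedDerivWithin i g s 0 / (Nat.factorial i : ℝ) := by
    intro i hi
    rw [hTdef, finset_sum_coeff]
    simp only [coeff_C_mul, coeff_X_pow, mul_ite, mul_one, mul_zero]
    rw [Finset.sum_ite_eq (Finset.range (ℓ+1)) i]
    rw [if_pos (Finset.mem_range.mpr (by omega))]
  have hT0 : ∀ i ≤ ℓ, (derivative^[i] T).eval 0 = iteratedDerivWithin i g s 0 := by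
    intro i hi
    rw [← coeff_zero_eq_eval_zero, coeff_iterate_derivative, zero_add, hTcoeff i hi,
      Nat.descFactorial_self, nsmul_eq_mul]
    have hfne : (Nat.factorial i : ℝ) ≠ 0 := Nat.cast_ne_zero.mpr i.factorial_ne_zero
    field_simp
  have hDT1 : derivative^[ℓ+1] T = 0 :=
    iterate_derivative_eq_zero (by omega : T.natDegree < ℓ+1)
  -- the Taylor remainder estimates, by downward induction
  set E : ℕ → ℝ → ℝ := fun m y => iteratedDerivWithin m g s y - (derivative^[m] T).eval y
    with hEdef
  have claim : ∀ d m, m + d = ℓ + 1 → ∀ y ∈ s, |E m y| ≤ M * h ^ d := by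
    intro d
    induction d with
    | zero =>
      intro m hm y hy
      have hmeq : m = ℓ+1 := by omega
      subst hmeq
      simp only [hEdef, hDT1, eval_zero, sub_zero, pow_zero, mul_one]
      exact hM y hy
    | succ d ih =>
      intro m hm y hy
      have hmℓ : m ≤ ℓ := by omega
      have hder : ∀ z ∈ s, HasDerivWithinAt (E m) (E (m+1) z) s z := by
        intro z hz
        have hdiff : DifferentiableOn ℝ (iteratedDerivWithin m g s) s :=
          hg.differentiableOn_iteratedDerivWithin
            (by exact_mod_cast Nat.lt_succ_of_le hmℓ) hs
        have h1 : HasDerivWithinAt (iteratedDerivWithin m g s)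
            (iteratedDerivWithin (m+1) g s z) s z := by
          have h1' := (hdiff z hz).hasDerivWithinAt
          rwa [← iteratedDerivWithin_succ] at h1'
        have h2 : HasDerivWithinAt (fun u => (derivative^[m] T).eval u)
            ((derivative^[m+1] T).eval z) s z := by
          have h2' := (Polynomial.hasDerivAt (derivative^[m] T) z).hasDerivWithinAt (s := s)
          rwa [← Function.iterate_succ_apply' derivative m T] at h2'
        exact h1.sub h2
      have hbound : ∀ z ∈ s, ‖E (m+1) z‖ ≤ M * h^d := by
        intro z hz; rw [Real.norm_eq_abs]; exact ih (m+1) (by omega) z hz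
      have hE0 : E m 0 = 0 := by
        simp only [hEdef, hT0 m hmℓ, sub_self]
      have hmvt := (convex_Icc (0:ℝ) h).norm_image_sub_le_of_norm_hasDerivWithin_le
        hder hbound h0s hy
      rw [hE0, sub_zero, Real.norm_eq_abs, Real.norm_eq_abs, sub_zero] at hmvt
      calc |E m y| ≤ M * h^d * |y| := hmvt
        _ ≤ M * h^d * h := by
            refine mul_le_mul_of_nonneg_left ?_ (by positivity)
            rw [abs_of_nonneg hy.1]; exact hy.2
        _ = M * h^(d+1) := by rw [pow_succ]; ring
  -- the remainder function
  set R : ℝ → ℝ := fun y => g y - T.eval y with hRdef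
  have hR : ∀ y ∈ s, |R y| ≤ M * h^(ℓ+1) := by
    intro y hy
    have hcl := claim (ℓ+1) 0 (by omega) y hy
    simpa [hEdef, hRdef, iteratedDerivWithin_zero] using hcl
  -- decomposition of the projection polynomial
  have hLcont : ∀ j : ℕ, Continuous fun y : ℝ => legendreP j (2*y/h - 1) := by
    intro j
    rw [legendreP_eval]
    have hc : Continuous fun y : ℝ => 2*y/h - 1 :=
      ((continuous_const.mul continuous_id).div_const h).sub continuous_const
    exact (Lpoly j).continuous.comp hc
  have hint1 : ∀ j : ℕ, IntervalIntegrable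
      (fun y => T.eval y * legendreP j (2*y/h-1)) volume 0 h := by
    intro j
    exact (T.continuous.mul (hLcont j)).intervalIntegrable _ _
  have hint2 : ∀ j : ℕ, IntervalIntegrable
      (fun y => R y * legendreP j (2*y/h-1)) volume 0 h := by
    intro j
    refine ContinuousOn.intervalIntegrable ?_
    rw [Set.uIcc_of_le hh.le]
    exact ((hg.continuousOn.sub T.continuous.continuousOn).mul (hLcont j).continuousOn)
  have hIsplit : ∀ j : ℕ, (∫ y in (0:ℝ)..h, g y * legendreP j (2*y/h-1))
      = (∫ y in (0:ℝ)..h, T.eval y * legendreP j (2*y/h-1))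
        + ∫ y in (0:ℝ)..h, R y * legendreP j (2*y/h-1) := by
    intro j
    rw [← intervalIntegral.integral_add (hint1 j) (hint2 j)]
    refine intervalIntegral.integral_congr fun y _ => ?_
    simp only [hRdef]; ring
  have hsplit : projPoly ℓ h g = T + projPoly ℓ h R := by
    have hTfix : projPoly ℓ h (fun y => T.eval y) = T := by
      apply Polynomial.funext
      intro r
      have h1 := legProj_poly ℓ h hh T hTdeg r
      rw [legProj_eq_projPoly] at h1
      exact h1
    rw [← hTfix, projPoly, projPoly, projPoly, ← Finset.sum_add_distrib]
    refine Finset.sum_congr rfl fun j _ => ?_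
    rw [← add_mul, ← C_add, ← mul_add, hIsplit j]
  -- the k-th derivative of the projection
  have hproj : iteratedDeriv k (legProj ℓ h g) x
      = (derivative^[k] T).eval x + (derivative^[k] (projPoly ℓ h R)).eval x := by
    rw [legProj_eq_projPoly, iteratedDeriv_polyeval]
    simp only [hsplit, iterate_derivative_add', eval_add]
  rw [hproj]
  have hEk := claim (ℓ - k + 1) k (by omega) x hx
  have hPR := projPoly_deriv_bound ℓ B hB1 hB h hh R (M * h^(ℓ+1)) (by positivity) hR
    k hk x hx
  have hpow : h^(ℓ+1) * (2/h)^k = 2^k * h^(ℓ-k+1) := by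
    rw [div_pow]
    have hsplit2 : ℓ+1 = k + (ℓ-k+1) := by omega
    rw [hsplit2, pow_add]
    field_simp
  have hPR2 : |(derivative^[k] (projPoly ℓ h R)).eval x|
      ≤ ((ℓ:ℝ)+1) * (2*(ℓ:ℝ)+1) * B^2 * 2^ℓ * h^(ℓ-k+1) * M := by
    refine hPR.trans ?_
    have h2k : (2:ℝ)^k ≤ 2^ℓ := pow_le_pow_right₀ (by norm_num) hk
    calc ((ℓ:ℝ)+1) * (2*(ℓ:ℝ)+1) * B^2 * (M * h^(ℓ+1)) * (2/h)^k
        = ((ℓ:ℝ)+1) * (2*(ℓ:ℝ)+1) * B^2 * M * (h^(ℓ+1) * (2/h)^k) := by ring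
      _ = ((ℓ:ℝ)+1) * (2*(ℓ:ℝ)+1) * B^2 * M * (2^k * h^(ℓ-k+1)) := by rw [hpow]
      _ ≤ ((ℓ:ℝ)+1) * (2*(ℓ:ℝ)+1) * B^2 * M * (2^ℓ * h^(ℓ-k+1)) := by
          refine mul_le_mul_of_nonneg_left ?_ (by positivity)
          exact mul_le_mul_of_nonneg_right h2k (by positivity)
      _ = ((ℓ:ℝ)+1) * (2*(ℓ:ℝ)+1) * B^2 * 2^ℓ * h^(ℓ-k+1) * M := by ring
  have hdiff_eq : iteratedDerivWithin k g s x
      - ((derivative^[k] T).eval x + (derivative^[k] (projPoly ℓ h R)).eval x)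
      = E k x - (derivative^[k] (projPoly ℓ h R)).eval x := by
    simp only [hEdef]; ring
  rw [hdiff_eq]
  calc |E k x - (derivative^[k] (projPoly ℓ h R)).eval x|
      ≤ |E k x| + |(derivative^[k] (projPoly ℓ h R)).eval x| := abs_sub _ _
    _ ≤ M * h^(ℓ-k+1) + ((ℓ:ℝ)+1) * (2*(ℓ:ℝ)+1) * B^2 * 2^ℓ * h^(ℓ-k+1) * M :=
        add_le_add hEk hPR2
    _ = (((ℓ:ℝ)+1) * (2*(ℓ:ℝ)+1) * B^2 * 2^ℓ + 1) * h^(ℓ-k+1) * M := by ring
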